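/- Let $X$ be a compact subset of a normed real vector space $(E,\|\cdot\|)$ and let $Y \subseteq E$ be a convex set with $X \subseteq \overline{Y}$. Suppose there exist a sequence $(S_n)$ of convex subsets of $Y$ each dense in $Y$, and a sequence $(\gamma_n)$ of upper semicontinuous bounded real-valued functions on $X$ with $\lim_{n\to\infty} \sup_X |\gamma_n| = 0$, such that for each $n$ and each $y \in S_n$, the function $x \mapsto \gamma_n(x) + \|x-y\|$ has a unique global maximum point in $X$. Then $X$ is a singleton (or empty). -/

import Mathlib

open Filter Topology Set

/-- An upper semicontinuous function on a nonempty compact set, bounded above,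
attains its maximum. -/
lemma usc_attains' {E : Type*} [MetricSpace E] {f : E → ℝ} {K : Set E}
    (hK : IsCompact K) (hne : K.Nonempty) (hf : UpperSemicontinuousOn f K)
    (hb : BddAbove (f '' K)) :
    ∃ m ∈ K, ∀ z ∈ K, f z ≤ f m := by
  classical
  set M := sSup (f '' K) with hM
  have hsel : ∀ k : ℕ, ∃ x, x ∈ K ∧ M - 1/(k+1) < f x := by
    intro k
    have hpos : (0:ℝ) < 1/(k+1) := by positivity
    obtain ⟨y, hy, hy'⟩ := exists_lt_of_lt_csSup (hne.image f) (by linarith : M - 1/(k+1) < M)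
    obtain ⟨x, hx, rfl⟩ := hy
    exact ⟨x, hx, hy'⟩
  choose g hgK hgf using hsel
  obtain ⟨m, hmK, φ, hφ, hlim⟩ := hK.tendsto_subseq hgK
  refine ⟨m, hmK, fun z hz => ?_⟩
  have hfm : M ≤ f m := by
    by_contra hlt
    push_neg at hlt
    have husc := hf m hmK ((f m + M)/2) (by linarith)
    have htend : Tendsto (fun k => g (φ k)) atTop (𝓝[K] m) :=
      tendsto_nhdsWithin_of_tendsto_nhds_of_eventually_within _ hlim
        (Eventually.of_forall fun k => hgK (φ k))
    obtain ⟨K₀, hK₀⟩ : ∃ n : ℕ, 1/((n:ℝ)+1) < (M - f m)/2 :=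
      exists_nat_one_div_lt (by linarith)
    obtain ⟨k, hk, hklt⟩ := ((htend.eventually husc).and (eventually_ge_atTop K₀)).exists
    have hk2 := hk  -- f (g (φ k)) < (f m + M)/2
    have hφk : ((K₀:ℝ)+1) ≤ ((φ k:ℝ)+1) := by
      have : K₀ ≤ φ k := le_trans hklt (hφ.le_apply)
      exact_mod_cast Nat.succ_le_succ this
    have h3 : 1/((φ k:ℝ)+1) ≤ 1/((K₀:ℝ)+1) :=
      one_div_le_one_div_of_le (by positivity) hφk
    have h4 := hgf (φ k)
    have : M - (M - f m)/2 < f (g (φ k)) := by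
      have : M - 1/((φ k:ℝ)+1) ≥ M - (M - f m)/2 + 0 := by
        have := lt_of_le_of_lt h3 hK₀
        linarith
      linarith
    linarith
  exact le_trans (le_csSup hb (mem_image_of_mem f hz)) hfm

set_option maxHeartbeats 1000000 in
theorem stmt_9 {E : Type*} [NormedAddCommGroup E] [NormedSpace ℝ E]
    (X : Set E) (hXc : IsCompact X)
    (Y : Set E) (hYconv : Convex ℝ Y) (hXY : X ⊆ closure Y)
    (S : ℕ → Set E) (hSY : ∀ n, S n ⊆ Y) (hSconv : ∀ n, Convex ℝ (S n))
    (hSdense : ∀ n, Y ⊆ closure (S n))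
    (γ : ℕ → E → ℝ) (hγusc : ∀ n, UpperSemicontinuousOn (γ n) X)
    (hγb : ∀ n, ∃ M, ∀ x ∈ X, |γ n x| ≤ M)
    (hγ0 : Filter.Tendsto (fun n => ⨆ x : X, |γ n x|) Filter.atTop (nhds 0))
    (huniq : ∀ n, ∀ y ∈ S n,
      ∃! a, a ∈ X ∧ IsMaxOn (fun x => γ n x + ‖x - y‖) X a) :
    X.Subsingleton := by
  classical
  intro a ha b hb
  by_contra hab
  have hXne : X.Nonempty := ⟨a, ha⟩
  haveI : Nonempty X := hXne.to_subtype
  set d : ℝ := ‖a - b‖ with hd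
  have hd0 : 0 < d := by
    rw [hd]
    exact norm_sub_pos_iff.2 hab
  -- choose n with small perturbation
  obtain ⟨n, hn⟩ : ∃ n, (⨆ x : X, |γ n x|) < d/100 := by
    have := (hγ0.eventually (eventually_lt_nhds (by positivity : (0:ℝ) < d/100)))
    exact this.exists
  obtain ⟨M, hM⟩ := hγb n
  have hγs : ∀ x ∈ X, |γ n x| < d/100 := by
    intro x hx
    refine lt_of_le_of_lt ?_ hn
    exact le_ciSup ⟨M, by rintro _ ⟨x, rfl⟩; exact hM x x.2⟩ (⟨x, hx⟩ : X)
  -- X is in the closure of S n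
  have hXS : X ⊆ closure (S n) :=
    hXY.trans (closure_minimal (hSdense n) isClosed_closure)
  set ε : ℝ := d/100 with hε
  have hε0 : 0 < ε := by positivity
  -- finite net of X
  have hcov0 : X ⊆ ⋃ x ∈ X, Metric.ball x ε := fun x hx =>
    Set.mem_biUnion hx (Metric.mem_ball_self hε0)
  obtain ⟨T, hTX, hTfin, hcov⟩ :=
    hXc.elim_finite_subcover_image (fun x _ => Metric.isOpen_ball) hcov0
  -- select points of S n near net points
  have hsel : ∀ x ∈ T, ∃ p, p ∈ S n ∧ ‖p - x‖ < ε := by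
    intro x hx
    obtain ⟨p, hp, hdp⟩ := Metric.mem_closure_iff.1 (hXS (hTX hx)) ε hε0
    exact ⟨p, hp, by rwa [← dist_eq_norm, dist_comm]⟩
  choose! sel hselS hselnear using hsel
  set F : Set E := sel '' T with hF
  have hFS : F ⊆ S n := by rintro _ ⟨x, hx, rfl⟩; exact hselS x hx
  set P : Set E := convexHull ℝ F with hP
  have hPS : P ⊆ S n := convexHull_min hFS (hSconv n)
  have hPcp : IsCompact P := (hTfin.image sel).isCompact_convexHull ℝ
  have hPconv : Convex ℝ P := convex_convexHull ℝ F
  have hPne : P.Nonempty := by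
    obtain ⟨x, hx, -⟩ := Set.mem_iUnion₂.1 (hcov ha)
    exact ⟨sel x, subset_convexHull ℝ F ⟨x, hx, rfl⟩⟩
  -- the perturbed farthest distance function
  set r : E → ℝ := fun y => ⨆ x : X, (γ n (x : E) + ‖(x : E) - y‖) with hr
  -- bounded above
  obtain ⟨C, hC⟩ : ∃ C, ∀ x ∈ X, ‖x‖ ≤ C := hXc.isBounded.exists_norm_le
  have hBy : ∀ y : E, BddAbove (Set.range fun x : X => γ n (x : E) + ‖(x : E) - y‖) := by
    intro y
    refine ⟨M + (C + ‖y‖), ?_⟩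
    rintro _ ⟨x, rfl⟩
    have h1 : γ n x ≤ M := le_trans (le_abs_self _) (hM x x.2)
    have h2 : ‖(x : E) - y‖ ≤ C + ‖y‖ :=
      le_trans (norm_sub_le _ _) (by linarith [hC x x.2])
    exact add_le_add h1 h2
  have hrge : ∀ y : E, ∀ x ∈ X, γ n x + ‖x - y‖ ≤ r y := fun y x hx =>
    le_ciSup (hBy y) (⟨x, hx⟩ : X)
  have hrmax : ∀ y : E, ∀ m, m ∈ X → IsMaxOn (fun x => γ n x + ‖x - y‖) X m →
      r y = γ n m + ‖m - y‖ := by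
    intro y m hm hmax
    exact le_antisymm (ciSup_le fun x => hmax x.2) (hrge y m hm)
  -- r is Lipschitz
  have hlip : ∀ y z : E, r y ≤ r z + ‖y - z‖ := by
    intro y z
    refine ciSup_le fun x => ?_
    have : ‖(x : E) - y‖ ≤ ‖(x : E) - z‖ + ‖y - z‖ := by
      have h := norm_sub_le_norm_sub_add_norm_sub (x : E) z y
      rwa [norm_sub_rev z y] at h
    linarith [hrge z x x.2]
  have hrcont : Continuous r := by
    have : LipschitzWith 1 r := by
      refine LipschitzWith.of_dist_le_mul fun y z => ?_
      rw [Real.dist_eq, NNReal.coe_one, one_mul, abs_sub_le_iff, dist_eq_norm]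
      constructor
      · linarith [hlip y z]
      · have := hlip z y
        rw [norm_sub_rev] at this
        linarith
    exact this.continuous
  -- minimize r over P
  obtain ⟨y₀, hy₀P, hy₀min⟩ := hPcp.exists_isMinOn hPne hrcont.continuousOn
  have hy₀S : y₀ ∈ S n := hPS hy₀P
  obtain ⟨m, ⟨hmX, hmmax⟩, hmuniq⟩ := huniq n y₀ hy₀S
  have hr₀ : r y₀ = γ n m + ‖m - y₀‖ := hrmax y₀ m hmX hmmax
  -- lower bound for r y₀
  have hrlb : d/2 - d/100 ≤ r y₀ := by
    have hda : d ≤ ‖a - y₀‖ + ‖b - y₀‖ := by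
      have h := norm_sub_le_norm_sub_add_norm_sub a y₀ b
      rw [norm_sub_rev y₀ b] at h
      exact h
    have h1 := hrge y₀ a ha
    have h2 := hrge y₀ b hb
    have ha' := hγs a ha
    have hb' := hγs b hb
    rcases le_total ‖a - y₀‖ ‖b - y₀‖ with hle | hle
    · have : d/2 ≤ ‖b - y₀‖ := by linarith
      have : d/2 - d/100 ≤ γ n b + ‖b - y₀‖ := by
        obtain ⟨u1, u2⟩ := abs_lt.1 hb'
        linarith
      linarith [h2]
    · have : d/2 ≤ ‖a - y₀‖ := by linarith
      have : d/2 - d/100 ≤ γ n a + ‖a - y₀‖ := by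
        obtain ⟨u1, u2⟩ := abs_lt.1 ha'
        linarith
      linarith [h1]
  obtain ⟨hγm1, hγm2⟩ := abs_lt.1 (hγs m hmX)
  have hr' : d/2 - 2*(d/100) ≤ ‖m - y₀‖ := by
    have : ‖m - y₀‖ = r y₀ - γ n m := by linarith [hr₀]
    linarith
  -- a point of P near m
  obtain ⟨xi, hxiT, hxi⟩ := Set.mem_iUnion₂.1 (hcov hmX)
  set p : E := sel xi with hp
  have hpP : p ∈ P := subset_convexHull ℝ F ⟨xi, hxiT, rfl⟩
  have hpm : ‖p - m‖ < 2*ε := by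
    have h1 := hselnear xi hxiT
    have h2 : ‖xi - m‖ < ε := by
      rw [← dist_eq_norm, dist_comm]
      exact Metric.mem_ball.1 hxi
    calc ‖p - m‖ ≤ ‖p - xi‖ + ‖xi - m‖ := norm_sub_le_norm_sub_add_norm_sub p xi m
      _ < 2*ε := by linarith
  -- the gap on the far region
  set ρ : ℝ := d/8 with hρ
  set W : Set E := {x ∈ X | ρ ≤ ‖x - m‖} with hW
  have hWX : W ⊆ X := fun x hx => hx.1
  have hWcp : IsCompact W := by
    have hcl : IsClosed {x : E | ρ ≤ ‖x - m‖} :=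
      isClosed_le continuous_const ((continuous_id.sub continuous_const).norm)
    exact hXc.inter_right hcl
  obtain ⟨δ, hδ0, hδ⟩ : ∃ δ, 0 < δ ∧ ∀ x ∈ W, γ n x + ‖x - y₀‖ ≤ r y₀ - δ := by
    rcases W.eq_empty_or_nonempty with hWe | hWne
    · exact ⟨1, one_pos, by rw [hWe]; intro x hx; exact absurd hx (Set.notMem_empty x)⟩
    · have husc : UpperSemicontinuousOn (fun x => γ n x + ‖x - y₀‖) W := by
        have h1 : UpperSemicontinuousOn (γ n) W := (hγusc n).mono hWX
        have h2 : UpperSemicontinuousOn (fun x => ‖x - y₀‖) W :=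
          (((continuous_id.sub continuous_const).norm).continuousOn).upperSemicontinuousOn
        exact h1.add h2
      have hbW : BddAbove ((fun x => γ n x + ‖x - y₀‖) '' W) := by
        obtain ⟨B, hB⟩ := hBy y₀
        refine ⟨B, ?_⟩
        rintro _ ⟨x, hx, rfl⟩
        exact hB ⟨(⟨x, hWX hx⟩ : X), rfl⟩
      obtain ⟨xs, hxsW, hxs⟩ := usc_attains' hWcp hWne husc hbW
      have hlt : γ n xs + ‖xs - y₀‖ < r y₀ := by
        rcases lt_or_eq_of_le (hrge y₀ xs (hWX hxsW)) with h | h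
        · exact h
        · exfalso
          have hmaxs : IsMaxOn (fun x => γ n x + ‖x - y₀‖) X xs := by
            intro z hz
            have h5 := hrge y₀ z hz
            simp only [Set.mem_setOf_eq]
            linarith
          have := hmuniq xs ⟨hWX hxsW, hmaxs⟩
          have hxm := hxsW.2
          rw [this] at hxm
          simp only [sub_self, norm_zero] at hxm
          have : (0:ℝ) < ρ := by rw [hρ]; positivity
          linarith
      refine ⟨r y₀ - (γ n xs + ‖xs - y₀‖), by linarith, fun x hx => ?_⟩
      have h6 : γ n x + ‖x - y₀‖ ≤ γ n xs + ‖xs - y₀‖ := hxs x hx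
      linarith
  -- choose step size
  set τ : ℝ := min 1 (δ / (2 * (‖p - y₀‖ + 1))) with hτ
  have hτ0 : 0 < τ := lt_min one_pos (by positivity)
  have hτ1 : τ ≤ 1 := min_le_left _ _
  set yτ : E := y₀ + τ • (p - y₀) with hyτ
  have hyτP : yτ ∈ P := by
    have := hPconv hy₀P hpP (by linarith : (0:ℝ) ≤ 1 - τ) (le_of_lt hτ0) (by ring)
    convert this using 1
    rw [hyτ]
    module
  have hyτy₀ : ‖yτ - y₀‖ = τ * ‖p - y₀‖ := by
    rw [hyτ]
    simp [norm_smul, abs_of_pos hτ0]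
  -- the key decrease
  set c : ℝ := ‖m - y₀‖ - 2*ρ - 2*ε with hc
  have hc0 : 0 < c := by
    rw [hc, hρ, hε]
    linarith [hr']
  have key : ∀ x ∈ X, γ n x + ‖x - yτ‖ ≤ max (r y₀ - τ * c) (r y₀ - δ + τ * ‖p - y₀‖) := by
    intro x hx
    by_cases hxm : ‖x - m‖ < ρ
    · -- near the maximizer: move toward p decreases the norm
      refine le_trans ?_ (le_max_left _ _)
      have hxp : ‖x - p‖ ≤ ρ + 2*ε := by
        calc ‖x - p‖ ≤ ‖x - m‖ + ‖m - p‖ := norm_sub_le_norm_sub_add_norm_sub x m p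
          _ ≤ ρ + 2*ε := by
            rw [norm_sub_rev] at hpm
            linarith
      have hxy₀ : ‖m - y₀‖ - ρ ≤ ‖x - y₀‖ := by
        have h7 : ‖m - y₀‖ ≤ ‖m - x‖ + ‖x - y₀‖ := norm_sub_le_norm_sub_add_norm_sub m x y₀
        rw [norm_sub_rev m x] at h7
        linarith
      have hdecomp : x - yτ = (1 - τ) • (x - y₀) + τ • (x - p) := by
        rw [hyτ]
        module
      have hnorm : ‖x - yτ‖ ≤ (1 - τ) * ‖x - y₀‖ + τ * ‖x - p‖ := by
        rw [hdecomp]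
        calc ‖(1 - τ) • (x - y₀) + τ • (x - p)‖
            ≤ ‖(1 - τ) • (x - y₀)‖ + ‖τ • (x - p)‖ := norm_add_le _ _
          _ = (1 - τ) * ‖x - y₀‖ + τ * ‖x - p‖ := by
              rw [norm_smul, norm_smul, Real.norm_eq_abs, Real.norm_eq_abs,
                abs_of_nonneg (by linarith : (0:ℝ) ≤ 1 - τ), abs_of_pos hτ0]
      have hstep : ‖x - yτ‖ ≤ ‖x - y₀‖ - τ * c := by
        have h1 : (1 - τ) * ‖x - y₀‖ + τ * ‖x - p‖
            = ‖x - y₀‖ - τ * (‖x - y₀‖ - ‖x - p‖) := by ring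
        have h2 : c ≤ ‖x - y₀‖ - ‖x - p‖ := by
          rw [hc]; linarith
        nlinarith [hτ0.le]
      have h8 := hrge y₀ x hx
      linarith
    · -- far region: use the gap
      refine le_trans ?_ (le_max_right _ _)
      push_neg at hxm
      have hxW : x ∈ W := ⟨hx, hxm⟩
      have h1 := hδ x hxW
      have h2 : ‖x - yτ‖ ≤ ‖x - y₀‖ + τ * ‖p - y₀‖ := by
        calc ‖x - yτ‖ ≤ ‖x - y₀‖ + ‖y₀ - yτ‖ := norm_sub_le_norm_sub_add_norm_sub x y₀ yτ
          _ = ‖x - y₀‖ + τ * ‖p - y₀‖ := by rw [norm_sub_rev y₀ yτ, hyτy₀]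
      linarith
  have hrτ : r yτ ≤ max (r y₀ - τ * c) (r y₀ - δ + τ * ‖p - y₀‖) :=
    ciSup_le fun x => key x x.2
  have hτδ : τ * ‖p - y₀‖ < δ := by
    have h1 : τ ≤ δ / (2 * (‖p - y₀‖ + 1)) := min_le_right _ _
    have h2 : (0:ℝ) < 2 * (‖p - y₀‖ + 1) := by positivity
    have h3 : τ * ‖p - y₀‖ ≤ δ / (2 * (‖p - y₀‖ + 1)) * ‖p - y₀‖ :=
      mul_le_mul_of_nonneg_right h1 (norm_nonneg _)
    have h4 : δ / (2 * (‖p - y₀‖ + 1)) * ‖p - y₀‖ < δ := by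
      rw [div_mul_eq_mul_div, div_lt_iff₀ h2]
      nlinarith [norm_nonneg (p - y₀)]
    linarith
  have hlt : max (r y₀ - τ * c) (r y₀ - δ + τ * ‖p - y₀‖) < r y₀ := by
    apply max_lt
    · nlinarith
    · linarith
  have := hy₀min hyτP
  simp only [Set.mem_setOf_eq] at this
  linarith
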